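/- Let G be a finite directed graph whose adjacency matrix is primitive (so its edge shift C_G is topologically mixing), let a be a finite directed path in G, and let X be a subshift with topological entropy h(X) < h(C_G). For m ∈ ℕ let N_m denote the number of directed paths of length m in G that traverse the path a at least once (i.e. all paths of length m minus those avoiding a). Then for any fixed constant R ∈ ℕ, the ratio N_{l−R} / card(L_l(X)) tends to infinity as l → ∞. In particular, there exists ℓ such that for all l ≥ ℓ, card(L_l(X)) ≤ N_{l−R}, so there exist injections from L_l(X) into the set of paths of length l−R in G that traverse a. -/

import Mathlib

open Filter Function Set

/-- The left shift on bi-infinite sequences. -/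
def shiftMap (A : Type*) : (ℤ → A) → (ℤ → A) := fun x n => x (n + 1)

/-- The shift by an integer amount `l` (so `zShift A l = (shiftMap A)^l`). -/
def zShift (A : Type*) (l : ℤ) (x : ℤ → A) : ℤ → A := fun n => x (n + l)

/-- A subshift: a closed, shift-invariant subset of the full shift. -/
def IsSubshift (A : Type*) [TopologicalSpace A] (X : Set (ℤ → A)) : Prop :=
  IsClosed X ∧ shiftMap A '' X = X

/-- The set of points of `X` of period `n`. -/
def perPts (A : Type*) (n : ℕ) (X : Set (ℤ → A)) : Set (ℤ → A) :=
  {x ∈ X | (shiftMap A)^[n] x = x}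

/-- `x` has least period `n`. -/
def HasLeastPeriod (A : Type*) (x : ℤ → A) (n : ℕ) : Prop :=
  (shiftMap A)^[n] x = x ∧ ∀ m : ℕ, 1 ≤ m → m < n → (shiftMap A)^[m] x ≠ x

/-- The words of length `n` occurring in points of `X`. -/
def wordsOf (A : Type*) (X : Set (ℤ → A)) (n : ℕ) : Set (Fin n → A) :=
  {w | ∃ x ∈ X, ∀ i : Fin n, w i = x (i : ℤ)}

/-- `h` is the topological entropy of `X`, as the limit of `(1/n) log card(L_n(X))`. -/
def HasEntropy (A : Type*) (X : Set (ℤ → A)) (h : ℝ) : Prop :=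
  Filter.Tendsto (fun n : ℕ => Real.log (Nat.card (wordsOf A X n)) / n)
    Filter.atTop (nhds h)

/-- Topological mixing of a subshift. -/
def IsMixing (A : Type*) [TopologicalSpace A] (X : Set (ℤ → A)) : Prop :=
  ∀ U V : Set (ℤ → A), IsOpen U → IsOpen V → (U ∩ X).Nonempty → (V ∩ X).Nonempty →
    ∃ N : ℕ, ∀ n : ℕ, N ≤ n → ((shiftMap A)^[n] '' (U ∩ X) ∩ (V ∩ X)).Nonempty

/-- The word `w` occurs in `x` at position `i`. -/
def occursAt (A : Type*) (w : List A) (x : ℤ → A) (i : ℤ) : Prop :=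
  ∀ j : ℕ, (hj : j < w.length) → x (i + j) = w.get ⟨j, hj⟩

/-- A subshift of finite type: the points avoiding a finite set of forbidden words. -/
def IsSFT (A : Type*) (Y : Set (ℤ → A)) : Prop :=
  ∃ F : Finset (List A), Y = {x | ∀ w ∈ F, ∀ i : ℤ, ¬ occursAt A w x i}

/-- An embedding of the subshift `X` into the subshift `Y`: an injective continuous
map intertwining the shifts. -/
def IsSubshiftEmbedding {A B : Type*} [TopologicalSpace A] [TopologicalSpace B]
    (X : Set (ℤ → A)) (Y : Set (ℤ → B)) (f : (ℤ → A) → (ℤ → B)) : Prop :=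
  Set.MapsTo f X Y ∧ Set.InjOn f X ∧ ContinuousOn f X ∧
    ∀ x ∈ X, f (shiftMap A x) = shiftMap B (f x)

/-- Finite directed paths in a graph with source and target maps `src`, `trg`. -/
def IsGPath {V E : Type*} (src trg : E → V) (p : List E) : Prop :=
  p.Chain' fun e f => trg e = src f

/-- The adjacency matrix of the graph. -/
noncomputable def adjMatrix (V E : Type*) [Fintype V] [Fintype E] (src trg : E → V) :
    Matrix V V ℕ := fun u v => Nat.card {e : E // src e = u ∧ trg e = v}

/-- A nonnegative integer matrix is primitive if some power is entrywise positive. -/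
def IsPrimitive {V : Type*} [Fintype V] [DecidableEq V] (M : Matrix V V ℕ) : Prop :=
  ∃ k : ℕ, 0 < k ∧ ∀ u v : V, 0 < (M ^ k) u v

/-- The edge shift of the graph: all bi-infinite directed edge paths. -/
def edgeShift (V E : Type*) (src trg : E → V) : Set (ℤ → E) :=
  {c | ∀ k : ℤ, trg (c k) = src (c (k + 1))}

/-- The label map sending a bi-infinite path to its label sequence. -/
def labelMap {E Θ : Type*} (lab : E → Θ) (c : ℤ → E) : ℤ → Θ := fun k => lab (c k)

/-- The graph is strongly connected. -/
def StronglyConnected {V E : Type*} (src trg : E → V) : Prop :=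
  ∀ u v : V, ∃ (p : List E) (hp : p ≠ []), IsGPath src trg p ∧
    src (p.head hp) = u ∧ trg (p.getLast hp) = v

lemma finite_paths {E : Type*} [Finite E] (n : ℕ) (P : List E → Prop) :
    Finite {p : List E // p.length = n ∧ P p} := by
  apply Finite.of_injective (β := Fin n → E)
    (f := fun p => fun i : Fin n => p.1.get (Fin.cast p.2.1.symm i))
  intro p q h
  apply Subtype.ext
  apply List.ext_get (by rw [p.2.1, q.2.1])
  intro i h1 h2
  have := congrFun h ⟨i, by omega⟩
  simpa using this

lemma exists_inj_of_card_le {α β : Type*} [Finite α] [Finite β]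
    (h : Nat.card α ≤ Nat.card β) : ∃ f : α → β, Function.Injective f := by
  cases isEmpty_or_nonempty α with
  | inl he => exact ⟨isEmptyElim, fun a => isEmptyElim a⟩
  | inr hne =>
    haveI := Fintype.ofFinite α
    haveI := Fintype.ofFinite β
    rw [Nat.card_eq_fintype_card, Nat.card_eq_fintype_card] at h
    obtain ⟨f⟩ := Function.Embedding.nonempty_of_card_le h
    exact ⟨f, f.injective⟩

lemma exists_path_of_pow_pos {V E : Type*} [Fintype V] [Fintype E] [DecidableEq V]
    (src trg : E → V) : ∀ (k : ℕ) (u v : V), 0 < (adjMatrix V E src trg ^ k) u v →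
    ∃ p : List E, p.length = k ∧ IsGPath src trg p ∧
      (∀ e ∈ p.head?, src e = u) ∧ (∀ e ∈ p.getLast?, trg e = v) ∧ (p = [] → u = v) := by
  intro k
  induction k with
  | zero =>
    intro u v h
    rw [pow_zero, Matrix.one_apply] at h
    refine ⟨[], rfl, List.isChain_nil, by simp, by simp, fun _ => ?_⟩
    by_contra hne
    simp [hne] at h
  | succ k ih =>
    intro u v h
    rw [pow_succ, Matrix.mul_apply] at h
    obtain ⟨w, -, hw⟩ := Finset.exists_ne_zero_of_sum_ne_zero (Nat.pos_iff_ne_zero.mp h)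
    obtain ⟨h1, h2⟩ := mul_ne_zero_iff.mp hw
    obtain ⟨p, hlen, hpath, hhead, hlast, hnil⟩ := ih u w (Nat.pos_of_ne_zero h1)
    have : Nonempty {e : E // src e = w ∧ trg e = v} := by
      rcases Nat.card_ne_zero.mp h2 with ⟨h, _⟩
      exact h
    obtain ⟨e, he1, he2⟩ := this
    refine ⟨p ++ [e], by simp [hlen], ?_, ?_, ?_, by simp⟩
    · rw [IsGPath, List.Chain', List.isChain_append]
      refine ⟨hpath, List.isChain_singleton e, ?_⟩
      intro x hx y hy
      simp only [List.head?_cons, Option.mem_def, Option.some.injEq] at hy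
      subst hy
      rw [hlast x hx, he1]
    · intro f hf
      cases p with
      | nil => simp at hf; subst hf; rw [he1, ← hnil rfl]
      | cons a t => simp at hf hhead ⊢; subst hf; exact hhead
    · intro f hf
      rw [List.getLast?_concat] at hf
      simp at hf; subst hf; exact he2


/-- if `G` is a finite directed graph with primitive adjacency matrix, `a`
is a path in `G`, and `X` is a subshift with `h(X) < h(C_G)`, then for fixed `R` the
number `N (l - R)` of paths of length `l - R` traversing `a` outgrows `card (L_l X)` (the
ratio tends to infinity); in particular for all large `l` there is an injection of
`L_l X` into the paths of length `l - R` traversing `a`. -/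
theorem paths_traversing_outgrow_words {A : Type*} [Fintype A]
    [TopologicalSpace A] [DiscreteTopology A]
    {V E : Type*} [Fintype V] [Fintype E] [DecidableEq V]
    (src trg : E → V)
    (hprim : IsPrimitive (adjMatrix V E src trg))
    (a : List E) (ha : IsGPath src trg a)
    (X : Set (ℤ → A)) (hX : IsSubshift A X)
    (hent : ∃ hx hc : ℝ, HasEntropy A X hx ∧
      HasEntropy E (edgeShift V E src trg) hc ∧ hx < hc)
    (R : ℕ)
    (N : ℕ → ℕ)
    (hN : ∀ m : ℕ, N m = Nat.card {p : List E // p.length = m ∧ IsGPath src trg p ∧ a <:+: p}) :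
    (∀ C : ℝ, ∀ᶠ l : ℕ in Filter.atTop,
        C * (Nat.card (wordsOf A X l) : ℝ) ≤ (N (l - R) : ℝ)) ∧
      ∃ ℓ : ℕ, ∀ l : ℕ, ℓ ≤ l →
        Nat.card (wordsOf A X l) ≤ N (l - R) ∧
        ∃ f : wordsOf A X l → {p : List E // p.length = l - R ∧ IsGPath src trg p ∧ a <:+: p},
          Function.Injective f := by
  obtain ⟨hx, hc, hXent, hCent, hlt⟩ := hent
  set CG := edgeShift V E src trg with hCG
  -- hx ≥ 0
  have hx0 : 0 ≤ hx := by
    rcases Set.eq_empty_or_nonempty X with hXe | ⟨x, hxX⟩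
    · have h0 : Filter.Tendsto (fun n : ℕ => Real.log (Nat.card (wordsOf A X n)) / n)
          atTop (nhds 0) := by
        have he : ∀ n : ℕ, Real.log (Nat.card (wordsOf A X n)) / n = 0 := by
          intro n
          have : wordsOf A X n = ∅ := by
            ext w; simp [wordsOf, hXe]
          simp [this]
        rw [funext he]; exact tendsto_const_nhds
      have := tendsto_nhds_unique hXent h0
      linarith
    · refine ge_of_tendsto' hXent fun n => ?_
      have hne : (wordsOf A X n).Nonempty := ⟨fun i => x (i : ℤ), x, hxX, fun i => rfl⟩
      have h1 : 1 ≤ Nat.card (wordsOf A X n) := Nat.one_le_iff_ne_zero.mpr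
        (Nat.card_ne_zero.mpr ⟨hne.to_subtype, Set.toFinite _⟩)
      exact div_nonneg (Real.log_nonneg (by exact_mod_cast h1)) (Nat.cast_nonneg n)
  have hc0 : 0 < hc := lt_of_le_of_lt hx0 hlt
  -- E nonempty
  have hE : Nonempty E := by
    by_contra hE
    have hw : ∀ n : ℕ, wordsOf E CG n = ∅ := by
      intro n
      ext w
      simp only [wordsOf, mem_setOf_eq, mem_empty_iff_false, iff_false, not_exists]
      rintro y ⟨-, -⟩
      exact hE ⟨y 0⟩
    have he : ∀ n : ℕ, Real.log (Nat.card (wordsOf E CG n)) / n = 0 := by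
      intro n; rw [hw n]; simp
    have h0 : hc = 0 := tendsto_nhds_unique hCent <| by
      rw [funext he]; exact tendsto_const_nhds
    linarith
  -- a'
  obtain ⟨a', ha'ne, ha'p, haa'⟩ : ∃ a', a' ≠ [] ∧ IsGPath src trg a' ∧ a <:+: a' := by
    rcases eq_or_ne a [] with h | h
    · exact ⟨[Classical.arbitrary E], by simp, List.isChain_singleton _, by simp [h]⟩
    · exact ⟨a, h, ha, List.infix_rfl⟩
  obtain ⟨k, hk0, hkpos⟩ := hprim
  choose c clen cpath chead clast _ using fun u v => exists_path_of_pow_pos src trg k u v (hkpos u v)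
  have hcne : ∀ u v, c u v ≠ [] := by
    intro u v h
    rw [← List.length_eq_zero_iff, clen] at h
    omega
  -- counting lemma
  have hcount : ∀ n : ℕ, 1 ≤ n → Nat.card (wordsOf E CG n) ≤ N (n + k + a'.length) := by
    intro n hn
    rw [hN]
    haveI : Finite {p : List E // p.length = n + k + a'.length ∧ IsGPath src trg p ∧ a <:+: p} :=
      finite_paths _ _
    have hofn : ∀ w : Fin n → E, List.ofFn w ≠ [] := by
      intro w h
      rw [List.ofFn_eq_nil_iff] at h
      omega
    refine Nat.card_le_card_of_injective
      (fun w => ⟨List.ofFn (w : Fin n → E) ++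
        c (trg ((List.ofFn (w : Fin n → E)).getLast (hofn _))) (src (a'.head ha'ne)) ++ a',
        ?_, ?_, ?_⟩) ?_
    · simp only [List.length_append, List.length_ofFn, clen]
    · obtain ⟨y, hy, hwy⟩ := w.2
      have hget : ∀ (j : ℕ) (hj : j < (List.ofFn (w : Fin n → E)).length),
          (List.ofFn (w : Fin n → E)).get ⟨j, hj⟩ = y (j : ℤ) := by
        intro j hj
        rw [List.get_ofFn, hwy]
        simp
      have hchain : IsGPath src trg (List.ofFn (w : Fin n → E)) := by
        rw [IsGPath, List.Chain', List.isChain_iff_getElem]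
        intro i hi
        have hg1 := hget i (by omega)
        have hg2 := hget (i + 1) hi
        simp only [List.get_eq_getElem] at hg1 hg2
        rw [hg1, hg2]
        have := hy (i : ℤ)
        push_cast
        convert this using 2
      rw [IsGPath, List.Chain', List.isChain_append]
      refine ⟨?_, ha'p, ?_⟩
      · rw [List.isChain_append]
        refine ⟨hchain, cpath _ _, ?_⟩
        intro p hp q hq
        rw [List.getLast?_eq_getLast (hofn _), Option.mem_def, Option.some.injEq] at hp
        subst hp
        exact (chead _ _ q hq).symm
      · intro p hp q hq
        rw [List.getLast?_append, List.getLast?_eq_getLast (hcne _ _), Option.some_or,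
          Option.mem_def, Option.some.injEq] at hp
        subst hp
        rw [List.head?_eq_head ha'ne, Option.mem_def, Option.some.injEq] at hq
        subst hq
        exact clast _ _ _ (Option.mem_def.mpr (List.getLast?_eq_getLast (hcne _ _)))
    · exact haa'.trans (List.suffix_append _ a').isInfix
    · intro w1 w2 h
      have h' := congrArg Subtype.val h
      simp only [List.append_assoc] at h'
      have h'' := List.append_inj_left h' (by simp)
      exact Subtype.ext (List.ofFn_injective h'')
  -- analytic part
  set ε := (hc - hx) / 3 with hεdef
  have hε : 0 < ε := by rw [hεdef]; linarith
  have hXub : ∀ᶠ l : ℕ in atTop, (Nat.card (wordsOf A X l) : ℝ) ≤ Real.exp ((hx + ε) * l) := by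
    filter_upwards [hXent.eventually_lt_const (lt_add_of_pos_right hx hε),
      eventually_ge_atTop 1] with l h1 h2
    rcases Nat.eq_zero_or_pos (Nat.card (wordsOf A X l)) with h0 | h0
    · rw [h0, Nat.cast_zero]
      exact (Real.exp_pos _).le
    · have hl : (0:ℝ) < l := by exact_mod_cast h2
      rw [div_lt_iff₀ hl] at h1
      calc (Nat.card (wordsOf A X l) : ℝ)
          = Real.exp (Real.log (Nat.card (wordsOf A X l))) :=
            (Real.exp_log (by exact_mod_cast h0)).symm
        _ ≤ Real.exp ((hx + ε) * l) := Real.exp_le_exp.2 h1.le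
  have hClb : ∀ᶠ m : ℕ in atTop,
      Real.exp ((hc - ε) * m) ≤ (Nat.card (wordsOf E CG m) : ℝ) := by
    filter_upwards [hCent.eventually_const_lt (show hc - ε < hc by linarith),
      eventually_ge_atTop 1] with m h1 h2
    have hm : (0:ℝ) < m := by exact_mod_cast h2
    rw [lt_div_iff₀ hm] at h1
    have hpos : 0 < (hc - ε) * m := by
      apply mul_pos _ hm
      rw [hεdef]; linarith
    have hcard : Nat.card (wordsOf E CG m) ≠ 0 := by
      intro h
      rw [h] at h1
      norm_num at h1
      linarith
    calc Real.exp ((hc - ε) * m) ≤ Real.exp (Real.log (Nat.card (wordsOf E CG m))) :=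
          Real.exp_le_exp.2 h1.le
      _ = (Nat.card (wordsOf E CG m) : ℝ) := Real.exp_log (by exact_mod_cast Nat.pos_of_ne_zero hcard)
  set c0 := R + k + a'.length with hc0def
  have main : ∀ C : ℝ, ∀ᶠ l : ℕ in Filter.atTop,
      C * (Nat.card (wordsOf A X l) : ℝ) ≤ (N (l - R) : ℝ) := by
    intro C
    set C' := max C 1 with hC'def
    have hC'1 : (1:ℝ) ≤ C' := le_max_right _ _
    have hCC' : C ≤ C' := le_max_left _ _
    have hev3 : ∀ᶠ l : ℕ in atTop, C' ≤ Real.exp (ε * l - (hc - ε) * c0) := by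
      have ht : Tendsto (fun l : ℕ => ε * (l:ℝ) - (hc - ε) * c0) atTop atTop := by
        apply tendsto_atTop_add_const_right
        exact (tendsto_natCast_atTop_atTop : Tendsto (fun l : ℕ => (l:ℝ)) atTop atTop).const_mul_atTop hε
      exact (Real.tendsto_exp_atTop.comp ht).eventually_ge_atTop C'
    filter_upwards [hXub, (tendsto_sub_atTop_nat c0).eventually hClb, hev3,
      eventually_ge_atTop (c0 + 1)] with l hA hB hC3 hl
    have hsub : l - R = (l - c0) + k + a'.length := by omega
    have hNlb : (Nat.card (wordsOf E CG (l - c0)) : ℝ) ≤ (N (l - R) : ℝ) := by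
      rw [hsub]
      exact_mod_cast hcount (l - c0) (by omega)
    have hcast : ((l - c0 : ℕ) : ℝ) = (l:ℝ) - (c0:ℝ) := by
      rw [Nat.cast_sub (by omega)]
    calc C * (Nat.card (wordsOf A X l) : ℝ)
        ≤ C' * (Nat.card (wordsOf A X l) : ℝ) := by
          apply mul_le_mul_of_nonneg_right hCC' (Nat.cast_nonneg _)
      _ ≤ C' * Real.exp ((hx + ε) * l) := by
          apply mul_le_mul_of_nonneg_left hA (by linarith)
      _ ≤ Real.exp (ε * l - (hc - ε) * c0) * Real.exp ((hx + ε) * l) := by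
          apply mul_le_mul_of_nonneg_right hC3 (Real.exp_pos _).le
      _ = Real.exp ((hc - ε) * ((l - c0 : ℕ) : ℝ)) := by
          rw [← Real.exp_add, hcast, hεdef]
          ring_nf
      _ ≤ (Nat.card (wordsOf E CG (l - c0)) : ℝ) := hB
      _ ≤ (N (l - R) : ℝ) := hNlb
  refine ⟨main, ?_⟩
  obtain ⟨ℓ, hℓ⟩ := Filter.eventually_atTop.mp (main 1)
  refine ⟨ℓ, fun l hl => ?_⟩
  have hcard : Nat.card (wordsOf A X l) ≤ N (l - R) := by
    have := hℓ l hl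
    rw [one_mul] at this
    exact_mod_cast this
  refine ⟨hcard, ?_⟩
  haveI : Finite {p : List E // p.length = l - R ∧ IsGPath src trg p ∧ a <:+: p} :=
    finite_paths _ _
  apply exists_inj_of_card_le
  rw [← hN]
  exact hcard
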